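/- Lower bound on the sandwiched Rains relative entropy of order 1/2 of the maximally entangled state: R̃_{1/2}(Φ^d) = inf_{σ∈PPT'} [−log₂ F(Φ^d, σ)] ≥ log₂ d, where the fidelity F is extended to positive semidefinite σ by the same formula. -/

import Mathlib

open scoped Matrix Classical ComplexOrder

namespace RainsPaper

/-- Natural matrix logarithm of a Hermitian matrix via spectral decomposition
(with the convention `log 0 = 0` on the kernel); junk value `0` otherwise. -/
noncomputable def matLog {n : Type} [Fintype n] [DecidableEq n] (A : Matrix n n ℂ) :
    Matrix n n ℂ :=
  if hA : A.IsHermitian then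
    (hA.eigenvectorUnitary : Matrix n n ℂ) *
      (Matrix.diagonal fun i => (Real.log (hA.eigenvalues i) : ℂ)) *
      (star (hA.eigenvectorUnitary : Matrix n n ℂ))
  else 0

/-- Real power of a Hermitian matrix via spectral decomposition (with the convention
`0 ^ r = 0` for `r ≠ 0`, so negative powers are taken on the support);
junk value `0` otherwise. -/
noncomputable def matPow {n : Type} [Fintype n] [DecidableEq n] (A : Matrix n n ℂ) (r : ℝ) :
    Matrix n n ℂ :=
  if hA : A.IsHermitian then
    (hA.eigenvectorUnitary : Matrix n n ℂ) *
      (Matrix.diagonal fun i => ((hA.eigenvalues i ^ r : ℝ) : ℂ)) *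
      (star (hA.eigenvectorUnitary : Matrix n n ℂ))
  else 0

/-- A state is a positive semidefinite operator with unit trace. -/
def IsState {n : Type} [Fintype n] (ρ : Matrix n n ℂ) : Prop :=
  ρ.PosSemidef ∧ ρ.trace = 1

/-- `supp ω ⊆ supp τ`, expressed (for Hermitian matrices) as `ker τ ⊆ ker ω`. -/
def SuppSubset {n : Type} [Fintype n] (ω τ : Matrix n n ℂ) : Prop :=
  ∀ v : n → ℂ, τ.mulVec v = 0 → ω.mulVec v = 0

/-- Trace norm `‖X‖₁ = Tr √(X†X)`. -/
noncomputable def traceNorm {n : Type} [Fintype n] [DecidableEq n] (X : Matrix n n ℂ) : ℝ :=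
  ((matPow (Xᴴ * X) 2⁻¹).trace).re

/-- Fidelity `F(ω,τ) = ‖√ω √τ‖₁²`. -/
noncomputable def fidelity {n : Type} [Fintype n] [DecidableEq n] (ω τ : Matrix n n ℂ) : ℝ :=
  (traceNorm (matPow ω 2⁻¹ * matPow τ 2⁻¹)) ^ 2

/-- Extended base-2 logarithm: `elog2 x = log₂ x` for `x > 0` and `-∞` for `x ≤ 0`. -/
noncomputable def elog2 (x : ℝ) : EReal :=
  if x ≤ 0 then ⊥ else ((Real.logb 2 x : ℝ) : EReal)

/-- Quantum relative entropy `D(ω‖τ) = Tr[ω (log₂ ω - log₂ τ)]` if `supp ω ⊆ supp τ`,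
and `+∞` otherwise. -/
noncomputable def qRelEnt {n : Type} [Fintype n] [DecidableEq n] (ω τ : Matrix n n ℂ) : EReal :=
  if SuppSubset ω τ then
    ((((ω * (matLog ω - matLog τ)).trace).re / Real.log 2 : ℝ) : EReal)
  else ⊤

/-- Sandwiched Rényi relative entropy
`D̃_α(ω‖τ) = (α-1)⁻¹ log₂ Tr[(τ^{(1-α)/(2α)} ω τ^{(1-α)/(2α)})^α]` when `α ∈ (0,1)`, or
`α > 1` and `supp ω ⊆ supp τ`; `+∞` otherwise. -/
noncomputable def sandRenyi {n : Type} [Fintype n] [DecidableEq n] (α : ℝ)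
    (ω τ : Matrix n n ℂ) : EReal :=
  if (0 < α ∧ α < 1) ∨ (1 < α ∧ SuppSubset ω τ) then
    (((α - 1)⁻¹ : ℝ) : EReal) *
      elog2 (((matPow (matPow τ ((1 - α) / (2 * α)) * ω * matPow τ ((1 - α) / (2 * α))) α).trace).re)
  else ⊤

/-- Petz Rényi relative entropy `D_α(ω‖τ) = (α-1)⁻¹ log₂ Tr[ω^α τ^{1-α}]` when `α ∈ (0,1)`,
or `α > 1` and `supp ω ⊆ supp τ`; `+∞` otherwise. -/
noncomputable def petzRenyi {n : Type} [Fintype n] [DecidableEq n] (α : ℝ)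
    (ω τ : Matrix n n ℂ) : EReal :=
  if (0 < α ∧ α < 1) ∨ (1 < α ∧ SuppSubset ω τ) then
    (((α - 1)⁻¹ : ℝ) : EReal) * elog2 (((matPow ω α * matPow τ (1 - α)).trace).re)
  else ⊤

/-- Geometric Rényi relative entropy `D̂_α(ω‖τ) = (α-1)⁻¹ log₂ Tr[τ (τ^{-1/2} ω τ^{-1/2})^α]`
(inverses on the support) when `α ∈ (0,1)`, or `α > 1` and `supp ω ⊆ supp τ`; `+∞` otherwise. -/
noncomputable def geomRenyi {n : Type} [Fintype n] [DecidableEq n] (α : ℝ)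
    (ω τ : Matrix n n ℂ) : EReal :=
  if (0 < α ∧ α < 1) ∨ (1 < α ∧ SuppSubset ω τ) then
    (((α - 1)⁻¹ : ℝ) : EReal) *
      elog2 (((τ * matPow (matPow τ (-2⁻¹) * ω * matPow τ (-2⁻¹)) α).trace).re)
  else ⊤

/-- Classical relative entropy `D(p‖q)`, equal to `+∞` unless `supp p ⊆ supp q`
(terms with `p x = 0` contribute zero). -/
noncomputable def cRelEnt {X : Type} [Fintype X] (p q : X → ℝ) : EReal :=
  if ∀ x, p x ≠ 0 → q x ≠ 0 then
    ((∑ x, p x * Real.logb 2 (p x / q x) : ℝ) : EReal)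
  else ⊤

/-- `p` is a probability distribution on the finite set `X`. -/
def IsProb {X : Type} [Fintype X] (p : X → ℝ) : Prop :=
  (∀ x, 0 ≤ p x) ∧ ∑ x, p x = 1

/-- The classical–quantum operator `∑ x p(x) |x⟩⟨x| ⊗ K x`. -/
noncomputable def cqOp {X A : Type} [DecidableEq X] (p : X → ℝ)
    (K : X → Matrix A A ℂ) : Matrix (X × A) (X × A) ℂ :=
  Matrix.of fun a b => if a.1 = b.1 then (p a.1 : ℂ) * K a.1 a.2 b.2 else 0

/-- Partial transpose (on the second tensor factor):
`(id ⊗ T)(X)_{(i,k),(j,l)} = X_{(i,l),(j,k)}`. -/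
def ptrans {a b : Type} (X : Matrix (a × b) (a × b) ℂ) : Matrix (a × b) (a × b) ℂ :=
  Matrix.of fun p q => X (p.1, q.2) (q.1, p.2)

/-- The partial transpose as a linear map. -/
def ptransL {a b : Type} : Matrix (a × b) (a × b) ℂ →ₗ[ℂ] Matrix (a × b) (a × b) ℂ where
  toFun := ptrans
  map_add' _ _ := rfl
  map_smul' _ _ := rfl

/-- `PPT'` : positive semidefinite bipartite operators whose partial transpose has
trace norm at most 1. -/
def PPTprime {a b : Type} [Fintype a] [Fintype b] [DecidableEq a] [DecidableEq b]
    (σ : Matrix (a × b) (a × b) ℂ) : Prop :=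
  σ.PosSemidef ∧ traceNorm (ptrans σ) ≤ 1

/-- The Rains relative entropy `R(ρ) = inf_{σ ∈ PPT'} D(ρ‖σ)`. -/
noncomputable def Rains {a b : Type} [Fintype a] [Fintype b] [DecidableEq a] [DecidableEq b]
    (ρ : Matrix (a × b) (a × b) ℂ) : EReal :=
  ⨅ σ : {σ : Matrix (a × b) (a × b) ℂ // PPTprime σ}, qRelEnt ρ σ.1

/-- The sandwiched Rényi Rains relative entropy `R̃_α(ρ) = inf_{σ ∈ PPT'} D̃_α(ρ‖σ)`. -/
noncomputable def sandRains {a b : Type} [Fintype a] [Fintype b] [DecidableEq a] [DecidableEq b]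
    (α : ℝ) (ρ : Matrix (a × b) (a × b) ℂ) : EReal :=
  ⨅ σ : {σ : Matrix (a × b) (a × b) ℂ // PPTprime σ}, sandRenyi α ρ σ.1

/-- The extension `id_{Fin k} ⊗ Φ` of a linear map on matrices. -/
def matExt {n m : Type} [Fintype n] [Fintype m]
    (Φ : Matrix n n ℂ →ₗ[ℂ] Matrix m m ℂ) (k : ℕ)
    (X : Matrix (Fin k × n) (Fin k × n) ℂ) : Matrix (Fin k × m) (Fin k × m) ℂ :=
  Matrix.of fun p q => Φ (Matrix.of fun i j => X (p.1, i) (q.1, j)) p.2 q.2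

/-- Complete positivity: all extensions `id_k ⊗ Φ` preserve positive semidefiniteness. -/
def IsCP {n m : Type} [Fintype n] [Fintype m]
    (Φ : Matrix n n ℂ →ₗ[ℂ] Matrix m m ℂ) : Prop :=
  ∀ (k : ℕ) (X : Matrix (Fin k × n) (Fin k × n) ℂ), X.PosSemidef → (matExt Φ k X).PosSemidef

/-- Trace preservation. -/
def IsTP {n m : Type} [Fintype n] [Fintype m]
    (Φ : Matrix n n ℂ →ₗ[ℂ] Matrix m m ℂ) : Prop :=
  ∀ X : Matrix n n ℂ, (Φ X).trace = X.trace

/-- A selective PPT operation: a family of completely positive maps `P x` such that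
`(id ⊗ T) ∘ P x ∘ (id ⊗ T)` is completely positive for every `x` and `∑ x, P x` is
trace preserving. -/
def IsSelectivePPT {a b a' b' X : Type} [Fintype a] [Fintype b] [Fintype a'] [Fintype b']
    [Fintype X]
    (P : X → (Matrix (a × b) (a × b) ℂ →ₗ[ℂ] Matrix (a' × b') (a' × b') ℂ)) : Prop :=
  (∀ x, IsCP (P x)) ∧ (∀ x, IsCP (ptransL ∘ₗ P x ∘ₗ ptransL)) ∧
    (∀ ρ : Matrix (a × b) (a × b) ℂ, ∑ x, ((P x) ρ).trace = ρ.trace)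

/-- The maximally entangled state `Φ^d = |Φ^d⟩⟨Φ^d|`, `|Φ^d⟩ = d^{-1/2} ∑ i |i⟩|i⟩`. -/
noncomputable def maxEnt (d : ℕ) : Matrix (Fin d × Fin d) (Fin d × Fin d) ℂ :=
  Matrix.of fun p q => if p.1 = p.2 ∧ q.1 = q.2 then ((d : ℂ))⁻¹ else 0

/-- Binary entropy `h₂(ε) = -ε log₂ ε - (1-ε) log₂ (1-ε)`. -/
noncomputable def h2 (ε : ℝ) : ℝ :=
  -ε * Real.logb 2 ε - (1 - ε) * Real.logb 2 (1 - ε)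


variable {n : Type} [Fintype n] [DecidableEq n]

lemma conj_diag_isHermitian (U : Matrix n n ℂ) (f : n → ℝ) :
    (U * Matrix.diagonal (fun i => (f i : ℂ)) * star U).IsHermitian := by
  unfold Matrix.IsHermitian
  simp [Matrix.star_eq_conjTranspose, Matrix.conjTranspose_mul, Matrix.diagonal_conjTranspose,
    mul_assoc, Matrix.diagonal_transpose]
  congr 1
  ext i
  simp [Complex.ext_iff]

lemma matPow_isHermitian (A : Matrix n n ℂ) (r : ℝ) : (matPow A r).IsHermitian := by
  unfold matPow
  split_ifs with hA
  · exact conj_diag_isHermitian _ _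
  · exact Matrix.isHermitian_zero

lemma conj_diag_posSemidef (U : Matrix n n ℂ) (f : n → ℝ) (hf : ∀ i, 0 ≤ f i) :
    (U * Matrix.diagonal (fun i => (f i : ℂ)) * star U).PosSemidef := by
  rw [Matrix.star_eq_conjTranspose]
  apply Matrix.PosSemidef.mul_mul_conjTranspose_same
  apply Matrix.posSemidef_diagonal_iff.mpr
  intro i
  exact_mod_cast hf i

lemma matPow_posSemidef {A : Matrix n n ℂ} (hA : A.PosSemidef) (r : ℝ) :
    (matPow A r).PosSemidef := by
  unfold matPow
  rw [dif_pos hA.1]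
  exact conj_diag_posSemidef _ _ (fun i => Real.rpow_nonneg (hA.eigenvalues_nonneg i) r)

lemma trace_conj_diag (U : Matrix n n ℂ) (hU : U ∈ Matrix.unitaryGroup n ℂ) (f : n → ℂ) :
    (U * Matrix.diagonal f * star U).trace = ∑ i, f i := by
  rw [Matrix.trace_mul_cycle, Matrix.mem_unitaryGroup_iff'.mp hU, one_mul,
    Matrix.trace_diagonal]

lemma trace_matPow {A : Matrix n n ℂ} (hA : A.IsHermitian) (r : ℝ) :
    (matPow A r).trace = ∑ i, ((hA.eigenvalues i ^ r : ℝ) : ℂ) := by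
  unfold matPow
  rw [dif_pos hA]
  exact trace_conj_diag _ hA.eigenvectorUnitary.2 _

lemma matPow_half_sq {A : Matrix n n ℂ} (hA : A.PosSemidef) :
    matPow A 2⁻¹ * matPow A 2⁻¹ = A := by
  unfold matPow
  rw [dif_pos hA.1]
  have hU := hA.1.eigenvectorUnitary.2
  set U : Matrix n n ℂ := (hA.1.eigenvectorUnitary : Matrix n n ℂ) with hUdef
  calc U * Matrix.diagonal (fun i => ((hA.1.eigenvalues i ^ (2⁻¹:ℝ) : ℝ) : ℂ)) * star U *
        (U * Matrix.diagonal (fun i => ((hA.1.eigenvalues i ^ (2⁻¹:ℝ) : ℝ) : ℂ)) * star U)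
      = U * (Matrix.diagonal (fun i => ((hA.1.eigenvalues i ^ (2⁻¹:ℝ) : ℝ) : ℂ)) *
          Matrix.diagonal (fun i => ((hA.1.eigenvalues i ^ (2⁻¹:ℝ) : ℝ) : ℂ))) * star U := by
        rw [mul_assoc (U * _), mul_assoc U, mul_assoc U, ← mul_assoc (star U),
          Matrix.mem_unitaryGroup_iff'.mp hU, one_mul, ← mul_assoc, ← mul_assoc]
        simp only [mul_assoc]
    _ = A := by
        rw [Matrix.diagonal_mul_diagonal]
        conv_rhs => rw [hA.1.spectral_theorem, Unitary.conjStarAlgAut_apply]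
        have : (fun i => ((hA.1.eigenvalues i ^ (2⁻¹:ℝ) : ℝ) : ℂ) *
            ((hA.1.eigenvalues i ^ (2⁻¹:ℝ) : ℝ) : ℂ)) = (RCLike.ofReal ∘ hA.1.eigenvalues) := by
          funext i
          rw [← Complex.ofReal_mul, ← Real.rpow_add' (hA.eigenvalues_nonneg i) (by norm_num)]
          norm_num
        rw [this]

lemma matPow_half_unique {A S : Matrix n n ℂ} (hA : A.PosSemidef) (hS : S.PosSemidef)
    (h : S * S = A) : matPow A 2⁻¹ = S := by
  have h1 : (matPow A 2⁻¹) ^ 2 = A := by rw [pow_two, matPow_half_sq hA]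
  have h2 : S ^ 2 = A := by rw [pow_two, h]
  open scoped MatrixOrder in
  exact (CFC.sq_eq_sq_iff (matPow A 2⁻¹) S (matPow_posSemidef hA 2⁻¹).nonneg hS.nonneg).mp (h1.trans h2.symm)

lemma conj_diag_mul_conj_diag (U : Matrix n n ℂ) (hU : U ∈ Matrix.unitaryGroup n ℂ)
    (f g : n → ℂ) :
    (U * Matrix.diagonal f * star U) * (U * Matrix.diagonal g * star U) =
      U * Matrix.diagonal (fun i => f i * g i) * star U := by
  rw [mul_assoc (U * _), mul_assoc U, mul_assoc U, ← mul_assoc (star U),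
    Matrix.mem_unitaryGroup_iff'.mp hU, one_mul, ← mul_assoc, ← mul_assoc, mul_assoc U,
    Matrix.diagonal_mul_diagonal]

lemma traceNorm_hermitian {τ : Matrix n n ℂ} (hτ : τ.IsHermitian) :
    traceNorm τ = ∑ i, |hτ.eigenvalues i| := by
  have hps : (τᴴ * τ).PosSemidef := Matrix.posSemidef_conjTranspose_mul_self τ
  have hU := hτ.eigenvectorUnitary.2
  set U : Matrix n n ℂ := (hτ.eigenvectorUnitary : Matrix n n ℂ) with hUdef
  set S : Matrix n n ℂ := U * Matrix.diagonal (fun i => ((|hτ.eigenvalues i| : ℝ) : ℂ)) * star U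
    with hSdef
  have hSps : S.PosSemidef := conj_diag_posSemidef _ _ (fun i => abs_nonneg _)
  have hfun : (fun i => ((|hτ.eigenvalues i| : ℝ) : ℂ) * ((|hτ.eigenvalues i| : ℝ) : ℂ)) =
      (fun i => (RCLike.ofReal ∘ hτ.eigenvalues) i * (RCLike.ofReal ∘ hτ.eigenvalues) i) := by
    funext i
    rw [← Complex.ofReal_mul, abs_mul_abs_self]
    norm_num
  have hSS : S * S = τᴴ * τ := by
    rw [hSdef, conj_diag_mul_conj_diag U hU, hfun, hτ.eq]
    conv_rhs => rw [hτ.spectral_theorem, Unitary.conjStarAlgAut_apply, conj_diag_mul_conj_diag U hU]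
  have : matPow (τᴴ * τ) 2⁻¹ = S := matPow_half_unique hps hSps hSS
  rw [traceNorm, this, hSdef, trace_conj_diag U hU]
  rw [← Complex.ofReal_sum]
  exact Complex.ofReal_re _

lemma trace_unitary_mul_le {F τ : Matrix n n ℂ} (hF : F ∈ Matrix.unitaryGroup n ℂ)
    (hτ : τ.IsHermitian) : ((F * τ).trace).re ≤ traceNorm τ := by
  have hU := hτ.eigenvectorUnitary.2
  set U : Matrix n n ℂ := (hτ.eigenvectorUnitary : Matrix n n ℂ) with hUdef
  set W : Matrix n n ℂ := star U * F * U with hWdef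
  have hW : W ∈ Matrix.unitaryGroup n ℂ :=
    mul_mem (mul_mem (Unitary.star_mem hU) hF) hU
  have hWbd : ∀ i, |(W i i).re| ≤ 1 := by
    intro i
    have h1 : (W * star W) i i = 1 := by
      rw [Matrix.mem_unitaryGroup_iff.mp hW]; simp
    have h2 : ∑ j, Complex.normSq (W i j) = 1 := by
      have := congrArg Complex.re h1
      simpa [Matrix.mul_apply, Matrix.star_apply, Complex.mul_conj,
        ← Complex.ofReal_sum] using this
    have h3 : Complex.normSq (W i i) ≤ 1 := by
      rw [← h2]
      exact Finset.single_le_sum (fun j _ => Complex.normSq_nonneg _) (Finset.mem_univ i)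
    have h4 : ‖W i i‖ ≤ 1 := by
      rw [← Real.sqrt_one]
      rw [Complex.norm_def]
      exact Real.sqrt_le_sqrt h3
    exact le_trans (Complex.abs_re_le_norm _) h4
  have hmd : ∀ (M : Matrix n n ℂ) (f : n → ℂ),
      (M * Matrix.diagonal f).trace = ∑ i, M i i * f i := by
    intro M f
    simp [Matrix.trace, Matrix.diag, Matrix.mul_apply, Matrix.diagonal, Matrix.of_apply,
      Finset.sum_ite_eq, mul_comm]
  have htr : (F * τ).trace = ∑ i, W i i * (hτ.eigenvalues i : ℂ) := by
    conv_lhs => rw [hτ.spectral_theorem, Unitary.conjStarAlgAut_apply]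
    rw [← mul_assoc, ← mul_assoc, Matrix.trace_mul_cycle]
    simp only [← mul_assoc]
    rw [← hUdef, ← hWdef, hmd]
    rfl
  rw [htr, traceNorm_hermitian hτ, Complex.re_sum]
  apply Finset.sum_le_sum
  intro i _
  have : (W i i * (hτ.eigenvalues i : ℂ)).re = (W i i).re * hτ.eigenvalues i := by
    simp [Complex.mul_re]
  rw [this]
  calc (W i i).re * hτ.eigenvalues i ≤ |(W i i).re * hτ.eigenvalues i| := le_abs_self _
    _ = |(W i i).re| * |hτ.eigenvalues i| := abs_mul _ _
    _ ≤ 1 * |hτ.eigenvalues i| := by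
        exact mul_le_mul_of_nonneg_right (hWbd i) (abs_nonneg _)
    _ = |hτ.eigenvalues i| := one_mul _

/-- rank one matrix out of a vector -/
noncomputable def rk1 {m : Type} (v : m → ℂ) : Matrix m m ℂ :=
  Matrix.of fun i j => v i * star (v j)

lemma rk1_isHermitian (v : n → ℂ) : (rk1 v).IsHermitian := by
  ext i j
  simp [rk1, Matrix.conjTranspose_apply, mul_comm]

lemma rk1_posSemidef (v : n → ℂ) : (rk1 v).PosSemidef := by
  refine Matrix.PosSemidef.of_dotProduct_mulVec_nonneg (rk1_isHermitian v) fun x => ?_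
  have : dotProduct (star x) ((rk1 v).mulVec x) =
      star (∑ j, star (v j) * x j) * (∑ j, star (v j) * x j) := by
    simp only [dotProduct, Matrix.mulVec, Matrix.of_apply, Pi.star_apply, star_sum,
      star_mul, star_star, rk1]
    rw [Finset.sum_mul_sum]
    refine Finset.sum_congr rfl fun i _ => ?_
    rw [Finset.mul_sum]
    refine Finset.sum_congr rfl fun j _ => ?_
    ring
  rw [this]
  exact star_mul_self_nonneg _
 
lemma rk1_mul_rk1 (v : n → ℂ) :
    rk1 v * rk1 v = (∑ j, star (v j) * v j) • rk1 v := by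
  ext i j
  simp only [Matrix.mul_apply, rk1, Matrix.of_apply, Matrix.smul_apply, smul_eq_mul]
  rw [Finset.sum_mul]
  refine Finset.sum_congr rfl fun r _ => ?_
  ring

lemma rk1_trace (v : n → ℂ) : (rk1 v).trace = ∑ j, star (v j) * v j := by
  simp [Matrix.trace, Matrix.diag, rk1, mul_comm]

lemma herm_conj_rk1 {R : Matrix n n ℂ} (hR : R.IsHermitian) (v : n → ℂ) :
    R * rk1 v * R = rk1 (R.mulVec v) := by
  ext i j
  simp only [Matrix.mul_apply, rk1, Matrix.of_apply, Matrix.mulVec, dotProduct,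
    Pi.star_apply, star_sum, star_mul, star_star]
  rw [Finset.sum_mul_sum, Finset.sum_comm]
  refine Finset.sum_congr rfl fun s _ => ?_
  rw [Finset.sum_mul]
  refine Finset.sum_congr rfl fun r _ => ?_
  have hst : star (R j s) = R s j := by
    conv_rhs => rw [← hR]
    simp [Matrix.conjTranspose_apply]
  rw [hst]
  ring

/-- the unit vector behind maxEnt -/
noncomputable def phiV (d : ℕ) : Fin d × Fin d → ℂ :=
  fun p => if p.1 = p.2 then (((Real.sqrt d)⁻¹ : ℝ) : ℂ) else 0

lemma maxEnt_eq_rk1 (d : ℕ) : maxEnt d = rk1 (phiV d) := by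
  ext p q
  simp only [maxEnt, rk1, phiV, Matrix.of_apply]
  by_cases h1 : p.1 = p.2 <;> by_cases h2 : q.1 = q.2 <;> simp [h1, h2]
  symm
  rw [← mul_inv]
  rw [show (Real.sqrt d : ℂ) * (Real.sqrt d : ℂ) = ((d:ℝ) : ℂ) by
    norm_cast; rw [Real.mul_self_sqrt (Nat.cast_nonneg d)]]
  push_cast
  ring

lemma phiV_norm {d : ℕ} (hd : 1 ≤ d) : ∑ j, star (phiV d j) * phiV d j = 1 := by
  have hterm : ∀ p : Fin d × Fin d, star (phiV d p) * phiV d p =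
      if p.1 = p.2 then ((d : ℂ))⁻¹ else 0 := by
    intro p
    by_cases h : p.1 = p.2 <;> simp [phiV, h, Complex.star_def, Complex.conj_ofReal]
    rw [← mul_inv]
    rw [show (Real.sqrt d : ℂ) * (Real.sqrt d : ℂ) = ((d:ℝ) : ℂ) by
      norm_cast; rw [Real.mul_self_sqrt (Nat.cast_nonneg d)]]
    push_cast
    ring
  simp only [hterm]
  rw [Fintype.sum_prod_type]
  simp only [Finset.sum_ite_eq, Finset.mem_univ, if_pos]
  rw [Finset.sum_const, Finset.card_univ, Fintype.card_fin, nsmul_eq_mul, mul_inv_cancel₀]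
  exact Nat.cast_ne_zero.mpr (by omega)

lemma ptrans_isHermitian {a b : Type} {σ : Matrix (a × b) (a × b) ℂ}
    (hσ : σ.IsHermitian) : (ptrans σ).IsHermitian := by
  ext p q
  have h := congrFun (congrFun hσ (p.1, q.2)) (q.1, p.2)
  simpa [ptrans, Matrix.conjTranspose_apply] using h

lemma trace_mul_ptrans {a b : Type} [Fintype a] [Fintype b]
    (A B : Matrix (a × b) (a × b) ℂ) :
    (ptrans A * ptrans B).trace = (A * B).trace := by
  simp only [Matrix.trace, Matrix.diag, Matrix.mul_apply, ptrans, Matrix.of_apply]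
  have h1 : (∑ p : a × b, ∑ q : a × b, A (p.1, q.2) (q.1, p.2) * B (q.1, p.2) (p.1, q.2))
      = ∑ x : (a × b) × (a × b), A (x.1.1, x.2.2) (x.2.1, x.1.2) * B (x.2.1, x.1.2) (x.1.1, x.2.2) :=
    (Fintype.sum_prod_type (fun x : (a × b) × (a × b) =>
      A (x.1.1, x.2.2) (x.2.1, x.1.2) * B (x.2.1, x.1.2) (x.1.1, x.2.2))).symm
  have h2 : (∑ p : a × b, ∑ q : a × b, A p q * B q p)
      = ∑ x : (a × b) × (a × b), A x.1 x.2 * B x.2 x.1 :=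
    (Fintype.sum_prod_type (fun x : (a × b) × (a × b) => A x.1 x.2 * B x.2 x.1)).symm
  rw [h1, h2]
  exact Equiv.sum_comp
    (⟨fun x => ((x.1.1, x.2.2), (x.2.1, x.1.2)), fun x => ((x.1.1, x.2.2), (x.2.1, x.1.2)),
      fun x => rfl, fun x => rfl⟩ : ((a × b) × (a × b)) ≃ ((a × b) × (a × b)))
    (fun x => A x.1 x.2 * B x.2 x.1)

noncomputable def swapM (d : ℕ) : Matrix (Fin d × Fin d) (Fin d × Fin d) ℂ :=
  Matrix.of fun p q => if p.1 = q.2 ∧ q.1 = p.2 then 1 else 0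

lemma swapM_unitary (d : ℕ) : swapM d ∈ Matrix.unitaryGroup (Fin d × Fin d) ℂ := by
  rw [Matrix.mem_unitaryGroup_iff]
  ext p q
  simp only [Matrix.mul_apply, swapM, Matrix.of_apply, Matrix.star_apply, Matrix.one_apply]
  have hsum : ∀ x : Fin d × Fin d,
      (if p.1 = x.2 ∧ x.1 = p.2 then (1:ℂ) else 0) *
        star (if q.1 = x.2 ∧ x.1 = q.2 then (1:ℂ) else 0) =
      if x = (p.2, p.1) ∧ q = p then 1 else 0 := by
    intro x
    by_cases h1 : p.1 = x.2 ∧ x.1 = p.2 <;> by_cases h2 : q.1 = x.2 ∧ x.1 = q.2 <;>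
      simp_all [Prod.ext_iff] <;> aesop
  simp only [hsum]
  by_cases h : q = p
  · subst h
    simp
  · simp [h, Ne.symm h]

lemma ptrans_maxEnt (d : ℕ) : ptrans (maxEnt d) = ((d : ℂ))⁻¹ • swapM d := by
  ext p q
  by_cases h1 : p.1 = q.2 <;> by_cases h2 : q.1 = p.2 <;>
    simp [ptrans, maxEnt, swapM, h1, h2]

lemma trace_maxEnt_mul_le {d : ℕ} {σ : Matrix (Fin d × Fin d) (Fin d × Fin d) ℂ}
    (hσ : σ.PosSemidef) (hpt : traceNorm (ptrans σ) ≤ 1) :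
    ((maxEnt d * σ).trace).re ≤ (d : ℝ)⁻¹ := by
  have h1 : (maxEnt d * σ).trace = ((d : ℂ))⁻¹ * (swapM d * ptrans σ).trace := by
    rw [← trace_mul_ptrans, ptrans_maxEnt, Matrix.smul_mul, Matrix.trace_smul, smul_eq_mul]
  have h2 := trace_unitary_mul_le (swapM_unitary d) (ptrans_isHermitian hσ.1)
  rw [h1, show ((d : ℂ))⁻¹ = (((d : ℝ)⁻¹ : ℝ) : ℂ) by push_cast; ring]
  rw [show ((((d:ℝ)⁻¹ : ℝ) : ℂ) * (swapM d * ptrans σ).trace).re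
      = (d:ℝ)⁻¹ * ((swapM d * ptrans σ).trace).re by simp [Complex.mul_re]]
  calc (d:ℝ)⁻¹ * ((swapM d * ptrans σ).trace).re ≤ (d:ℝ)⁻¹ * 1 := by
        apply mul_le_mul_of_nonneg_left (le_trans h2 hpt) (by positivity)
    _ = (d:ℝ)⁻¹ := mul_one _

lemma posSemidef_ofReal_smul {M : Matrix n n ℂ} (hM : M.PosSemidef) {r : ℝ} (hr : 0 ≤ r) :
    (((r : ℂ)) • M).PosSemidef := by
  refine Matrix.PosSemidef.of_dotProduct_mulVec_nonneg ?_ ?_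
  · unfold Matrix.IsHermitian
    rw [Matrix.conjTranspose_smul, hM.1]
    congr 1
    simp [Complex.star_def, Complex.conj_ofReal]
  · intro x
    rw [Matrix.smul_mulVec, dotProduct_smul, smul_eq_mul]
    have hz := hM.dotProduct_mulVec_nonneg x
    rw [Complex.le_def] at hz ⊢
    constructor
    · simp only [Complex.zero_re, Complex.mul_re, Complex.ofReal_re, Complex.ofReal_im,
        zero_mul, sub_zero]
      exact mul_nonneg hr (by simpa using hz.1)
    · simp only [Complex.zero_im, Complex.mul_im, Complex.ofReal_re, Complex.ofReal_im,
        zero_mul, add_zero]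
      have h2 : ((star x) ⬝ᵥ M.mulVec x).im = 0 := by
        have := hz.2; simpa using this.symm
      rw [h2, mul_zero]

lemma scalar_aux1 {c : ℝ} (hc0 : 0 ≤ c) (hpos : 0 < c) :
    (((Real.sqrt c)⁻¹ : ℝ) : ℂ) * (((Real.sqrt c)⁻¹ : ℝ) : ℂ) * (c : ℂ) = 1 := by
  push_cast
  rw [← mul_inv]
  norm_cast
  rw [Real.mul_self_sqrt hc0, inv_mul_cancel₀ (by positivity)]

lemma scalar_aux2 {c : ℝ} (hc0 : 0 ≤ c) (hpos : 0 < c) :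
    (((Real.sqrt c)⁻¹ : ℝ) : ℂ) * (c : ℂ) = ((Real.sqrt c : ℝ) : ℂ) := by
  have hsc : Real.sqrt c ≠ 0 := ne_of_gt (Real.sqrt_pos.mpr hpos)
  rw [show (c : ℂ) = ((Real.sqrt c : ℝ) : ℂ) * ((Real.sqrt c : ℝ) : ℂ) by
    norm_cast; rw [Real.mul_self_sqrt hc0], ← mul_assoc]
  norm_cast
  rw [inv_mul_cancel₀ hsc, one_mul]

lemma key_fid {d : ℕ} (hd : 1 ≤ d) (σ : Matrix (Fin d × Fin d) (Fin d × Fin d) ℂ)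
    (hσ : σ.PosSemidef) :
    ∃ c : ℝ, 0 ≤ c ∧ fidelity (maxEnt d) σ = c ∧
      ((maxEnt d * σ).trace) = (c : ℂ) ∧
      ((matPow (matPow σ 2⁻¹ * maxEnt d * matPow σ 2⁻¹) ((2⁻¹ : ℝ))).trace).re
        = Real.sqrt c := by
  set R : Matrix (Fin d × Fin d) (Fin d × Fin d) ℂ := matPow σ 2⁻¹ with hRdef
  have hRherm : R.IsHermitian := matPow_isHermitian σ 2⁻¹
  have hRps : R.PosSemidef := matPow_posSemidef hσ 2⁻¹
  have hRR : R * R = σ := matPow_half_sq hσ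
  have hPhips : (maxEnt d).PosSemidef := by rw [maxEnt_eq_rk1]; exact rk1_posSemidef _
  have hPhiPhi : maxEnt d * maxEnt d = maxEnt d := by
    rw [maxEnt_eq_rk1, rk1_mul_rk1, phiV_norm hd, one_smul]
  have hPhiHalf : matPow (maxEnt d) 2⁻¹ = maxEnt d := matPow_half_unique hPhips hPhips hPhiPhi
  set ψ : Fin d × Fin d → ℂ := R.mulVec (phiV d) with hψdef
  have hM : R * maxEnt d * R = rk1 ψ := by
    rw [maxEnt_eq_rk1, herm_conj_rk1 hRherm]
  obtain ⟨c, hc0, hcreal, hcsum⟩ : ∃ c : ℝ, 0 ≤ c ∧ c = ∑ j, Complex.normSq (ψ j) ∧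
      (∑ j, star (ψ j) * ψ j) = (c : ℂ) := by
    refine ⟨∑ j, Complex.normSq (ψ j),
      Finset.sum_nonneg fun j _ => Complex.normSq_nonneg _, rfl, ?_⟩
    push_cast
    refine Finset.sum_congr rfl fun j _ => ?_
    rw [Complex.star_def, mul_comm, Complex.mul_conj]
  have htrM : (rk1 ψ).trace = (c : ℂ) := by rw [rk1_trace, hcsum]
  have htrace : (maxEnt d * σ).trace = (c : ℂ) := by
    rw [← hRR, ← mul_assoc, Matrix.trace_mul_comm, ← mul_assoc, hM, htrM]
  have hsqrt_trace : ((matPow (rk1 ψ) ((2⁻¹ : ℝ))).trace).re = Real.sqrt c := by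
    rcases eq_or_lt_of_le hc0 with h0 | hpos
    · have hψ0 : rk1 ψ = 0 := by
        have hall : ∀ j, ψ j = 0 := by
          intro j
          have h0' : ∑ j, Complex.normSq (ψ j) = 0 := by rw [← hcreal, ← h0]
          have := (Finset.sum_eq_zero_iff_of_nonneg
            (fun j _ => Complex.normSq_nonneg (ψ j))).mp h0' j (Finset.mem_univ j)
          exact Complex.normSq_eq_zero.mp this
        ext i j
        simp [rk1, hall]
      rw [hψ0, matPow_half_unique Matrix.PosSemidef.zero Matrix.PosSemidef.zero (by simp)]
      simp [← h0, Real.sqrt_zero]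
    · set S : Matrix (Fin d × Fin d) (Fin d × Fin d) ℂ :=
        (((Real.sqrt c)⁻¹ : ℝ) : ℂ) • rk1 ψ with hSdef
      have hsc : Real.sqrt c ≠ 0 := ne_of_gt (Real.sqrt_pos.mpr hpos)
      have hSps : S.PosSemidef :=
        posSemidef_ofReal_smul (rk1_posSemidef ψ) (inv_nonneg.mpr (Real.sqrt_nonneg c))
      have hSS : S * S = rk1 ψ := by
        rw [hSdef, Matrix.smul_mul, Matrix.mul_smul, smul_smul, rk1_mul_rk1, hcsum, smul_smul]
        rw [scalar_aux1 hc0 hpos, one_smul]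
      rw [matPow_half_unique (rk1_posSemidef ψ) hSps hSS, hSdef, Matrix.trace_smul, htrM,
        smul_eq_mul]
      rw [scalar_aux2 hc0 hpos]
      exact Complex.ofReal_re _
  refine ⟨c, hc0, ?_, htrace, by rw [hM]; exact hsqrt_trace⟩
  rw [fidelity, hPhiHalf, ← hRdef, traceNorm]
  have hX : (maxEnt d * R)ᴴ * (maxEnt d * R) = rk1 ψ := by
    rw [Matrix.conjTranspose_mul, hRherm.eq, hPhips.1.eq, ← mul_assoc, mul_assoc R,
      hPhiPhi, hM]
  rw [hX, hsqrt_trace, Real.sq_sqrt hc0]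

lemma ereal_glue {c : ℝ} (hc0 : 0 ≤ c) :
    ((((2⁻¹ : ℝ) - 1)⁻¹ : ℝ) : EReal) * elog2 (Real.sqrt c) = -(elog2 c) := by
  rcases eq_or_lt_of_le hc0 with h0 | hpos
  · unfold elog2
    rw [← h0, Real.sqrt_zero, if_pos le_rfl, EReal.coe_mul_bot_of_neg (by norm_num)]
    simp
  · have hsp : 0 < Real.sqrt c := Real.sqrt_pos.mpr hpos
    unfold elog2
    rw [if_neg (not_le.mpr hsp), if_neg (not_le.mpr hpos),
      ← EReal.coe_mul, ← EReal.coe_neg]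
    congr 1
    unfold Real.logb
    rw [Real.log_sqrt hc0]
    ring

lemma elog2_bound {d : ℕ} {c : ℝ} (hc : c ≤ (d : ℝ)⁻¹) :
    ((Real.logb 2 d : ℝ) : EReal) ≤ -(elog2 c) := by
  rcases le_or_gt c 0 with h | h
  · unfold elog2
    rw [if_pos h]
    simp
  · unfold elog2
    rw [if_neg (not_le.mpr h), ← EReal.coe_neg, EReal.coe_le_coe_iff, le_neg]
    calc Real.logb 2 c ≤ Real.logb 2 ((d : ℝ)⁻¹) :=
          Real.logb_le_logb_of_le (by norm_num) h hc
      _ = -Real.logb 2 d := Real.logb_inv _ _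

/-- Lower bound on the sandwiched Rains relative entropy of order
`1/2` of the maximally entangled state:
`R̃_{1/2}(Φ^d) = inf_{σ ∈ PPT'} [-log₂ F(Φ^d, σ)] ≥ log₂ d`
(with `log₂ 0 = -∞`, so that `-log₂ 0 = +∞`). -/
theorem sandRains_half_maxEnt {d : ℕ} (hd : 1 ≤ d) :
    sandRains (a := Fin d) (b := Fin d) 2⁻¹ (maxEnt d) =
        (⨅ σ : {σ : Matrix (Fin d × Fin d) (Fin d × Fin d) ℂ // PPTprime σ},
          -(elog2 (fidelity (maxEnt d) σ.1)))
      ∧ ((Real.logb 2 d : ℝ) : EReal) ≤ sandRains (a := Fin d) (b := Fin d) 2⁻¹ (maxEnt d) := by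
  have hpt : ∀ σ : {σ : Matrix (Fin d × Fin d) (Fin d × Fin d) ℂ // PPTprime σ},
      sandRenyi 2⁻¹ (maxEnt d) σ.1 = -(elog2 (fidelity (maxEnt d) σ.1)) := by
    intro σ
    obtain ⟨c, hc0, hfid, htr, hhalf⟩ := key_fid hd σ.1 σ.2.1
    rw [sandRenyi, if_pos (Or.inl ⟨by norm_num, by norm_num⟩),
      show ((1 - (2⁻¹ : ℝ)) / (2 * 2⁻¹) : ℝ) = (2⁻¹ : ℝ) by norm_num,
      hhalf, hfid]
    exact ereal_glue hc0
  constructor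
  · rw [sandRains]
    exact iInf_congr hpt
  · rw [sandRains]
    apply le_iInf
    intro σ
    rw [hpt σ]
    obtain ⟨c, hc0, hfid, htr, hhalf⟩ := key_fid hd σ.1 σ.2.1
    rw [hfid]
    apply elog2_bound
    have hb := trace_maxEnt_mul_le σ.2.1 σ.2.2
    rw [htr] at hb
    simpa using hb


end RainsPaper
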